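/- A commutative ring R satisfies BLR-2 if and only if for every ideal I of R the quotient ring R/I satisfies BLR-3. -/

import Mathlib

/-- BLR-3 for a commutative ring: `I ⊓ J = 0` implies `I* + J* = S`,
where `I*` is the annihilator of `I`. -/
def IsBLR3 (S : Type*) [CommRing S] : Prop :=
  ∀ I J : Ideal S, I ⊓ J = ⊥ → I.annihilator + J.annihilator = ⊤

/-- A commutative ring `R` satisfies BLR-2 (`(I → J) + (J → I) = R`, with
`I → J = J.colon I`) iff every quotient of `R` by an ideal satisfies BLR-3. -/
theorem stmt_6 {R : Type*} [CommRing R] :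
    (∀ I J : Ideal R, J.colon I + I.colon J = ⊤) ↔
      ∀ I : Ideal R, IsBLR3 (R ⧸ I) := by
  constructor
  · intro h K I J hIJ
    set f := Ideal.Quotient.mk K with hf
    set I' := I.comap f with hI'
    set J' := J.comap f with hJ'
    have h2 := h I' J'
    rw [Ideal.eq_top_iff_one] at h2
    obtain ⟨a, ha, b, hb, hab⟩ := Submodule.mem_sup.mp h2
    -- key: products land in K
    have key : ∀ x : R, x ∈ J'.colon I' → f x ∈ I.annihilator := by
      intro x hx
      rw [Submodule.mem_annihilator]
      intro n hn
      obtain ⟨m, rfl⟩ := Ideal.Quotient.mk_surjective n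
      have hmI' : m ∈ I' := by simpa [hI'] using hn
      have h1 : x * m ∈ J' := Submodule.mem_colon.mp hx m hmI'
      have h2' : x * m ∈ I' := I'.mul_mem_left x hmI'
      have hmem : f (x * m) ∈ I ⊓ J := ⟨h2', h1⟩
      rw [hIJ] at hmem
      have : f (x * m) = 0 := hmem
      simpa [smul_eq_mul, map_mul] using this
    have key2 : ∀ x : R, x ∈ I'.colon J' → f x ∈ J.annihilator := by
      intro x hx
      rw [Submodule.mem_annihilator]
      intro n hn
      obtain ⟨m, rfl⟩ := Ideal.Quotient.mk_surjective n
      have hmJ' : m ∈ J' := by simpa [hJ'] using hn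
      have h1 : x * m ∈ I' := Submodule.mem_colon.mp hx m hmJ'
      have h2' : x * m ∈ J' := J'.mul_mem_left x hmJ'
      have hmem : f (x * m) ∈ I ⊓ J := ⟨h1, h2'⟩
      rw [hIJ] at hmem
      have : f (x * m) = 0 := hmem
      simpa [smul_eq_mul, map_mul] using this
    rw [Ideal.eq_top_iff_one]
    have : (1 : R ⧸ K) = f a + f b := by
      rw [← map_add, hab]; simp
    rw [this]
    exact Submodule.add_mem_sup (key a ha) (key2 b hb)
  · intro h I J
    set K := I ⊓ J with hK
    set f := Ideal.Quotient.mk K with hf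
    have hdisj : I.map f ⊓ J.map f = ⊥ := by
      rw [eq_bot_iff]
      rintro x ⟨hxI, hxJ⟩
      obtain ⟨a, haI, rfl⟩ := (Ideal.mem_map_iff_of_surjective f
        Ideal.Quotient.mk_surjective).mp hxI
      obtain ⟨b, hbJ, hab⟩ := (Ideal.mem_map_iff_of_surjective f
        Ideal.Quotient.mk_surjective).mp hxJ
      have hba : b - a ∈ K := by
        rw [← Ideal.Quotient.eq_zero_iff_mem, map_sub, hab, sub_self]
      have haJ : a ∈ J := by
        have : a = b - (b - a) := by ring
        rw [this]
        exact J.sub_mem hbJ hba.2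
      have : a ∈ K := ⟨haI, haJ⟩
      simpa [hf, Ideal.Quotient.eq_zero_iff_mem] using this
    have h3 := h K (I.map f) (J.map f) hdisj
    rw [Ideal.eq_top_iff_one] at h3
    obtain ⟨α, hα, β, hβ, hαβ⟩ := Submodule.mem_sup.mp h3
    obtain ⟨a, rfl⟩ := Ideal.Quotient.mk_surjective α
    obtain ⟨b, rfl⟩ := Ideal.Quotient.mk_surjective β
    have haJ : a ∈ J.colon I := by
      rw [Submodule.mem_colon]
      intro m hm
      rw [smul_eq_mul]
      have : f a • f m = 0 := Submodule.mem_annihilator.mp hα (f m)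
        (Ideal.mem_map_of_mem f hm)
      have hK' : a * m ∈ K := by
        rwa [smul_eq_mul, ← map_mul, Ideal.Quotient.eq_zero_iff_mem] at this
      exact hK'.2
    have hbI : b ∈ I.colon J := by
      rw [Submodule.mem_colon]
      intro m hm
      rw [smul_eq_mul]
      have : f b • f m = 0 := Submodule.mem_annihilator.mp hβ (f m)
        (Ideal.mem_map_of_mem f hm)
      have hK' : b * m ∈ K := by
        rwa [smul_eq_mul, ← map_mul, Ideal.Quotient.eq_zero_iff_mem] at this
      exact hK'.1
    have hker : (1 : R) - a - b ∈ K := by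
      rw [← Ideal.Quotient.eq_zero_iff_mem]
      simp only [map_sub, map_one]
      rw [show (1 : R ⧸ K) = f a + f b from hαβ.symm]
      ring
    rw [Ideal.eq_top_iff_one]
    have hsum : (1 : R) = (a + ((1 : R) - a - b)) + b := by ring
    rw [hsum]
    have hkJ : (1 : R) - a - b ∈ J.colon I := by
      rw [Submodule.mem_colon]
      intro m hm
      rw [smul_eq_mul]
      exact J.mul_mem_right m hker.2
    exact Submodule.add_mem_sup
      (Submodule.add_mem _ haJ hkJ) hbI
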